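/- Let P, R be positive integers, M an integer, and suppose h: R → C is continuous, 1/P-periodic, and satisfies h(x)^R = e^{2πiMx} for all real x. Then RP divides M. -/

import Mathlib

open Complex

/-- If `h : ℝ → ℂ` is continuous, `1/P`-periodic, and `h(x)^R = e^{2πiMx}` for all
`x`, then `RP` divides `M`. -/
theorem periodic_root_of_character (P R : ℕ) (hP : 0 < P) (hR : 0 < R) (M : ℤ)
    (h : ℝ → ℂ) (hcont : Continuous h)
    (hper : ∀ x : ℝ, h (x + 1 / P) = h x)
    (hpow : ∀ x : ℝ, h x ^ R = Complex.exp (2 * Real.pi * Complex.I * M * x)) :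
    ((R : ℤ) * P) ∣ M := by
  have hRC : (R : ℂ) ≠ 0 := Nat.cast_ne_zero.mpr hR.ne'
  set e : ℝ → ℂ := fun x => Complex.exp (2 * Real.pi * Complex.I * M * x / R) with he
  have hepow : ∀ x : ℝ, e x ^ R = Complex.exp (2 * Real.pi * Complex.I * M * x) := by
    intro x
    rw [he]
    rw [← Complex.exp_nat_mul]
    congr 1
    field_simp
  have hene : ∀ x, e x ≠ 0 := fun x => Complex.exp_ne_zero _
  set φ : ℝ → ℂ := fun x => h x / e x with hφ
  have hφpow : ∀ x, φ x ^ R = 1 := by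
    intro x
    rw [hφ]
    simp only [div_pow, hpow, hepow, div_self (Complex.exp_ne_zero _)]
  -- roots of unity form a finite set
  set S : Set ℂ := {z : ℂ | z ^ R = 1} with hS
  have hSfin : S.Finite := by
    apply Set.Finite.subset (Polynomial.nthRoots R (1 : ℂ)).toFinset.finite_toSet
    intro z hz
    simp only [Finset.mem_coe, Multiset.mem_toFinset, Polynomial.mem_nthRoots hR]
    exact hz
  haveI := hSfin.to_subtype
  -- the map into S, as a map into a discrete space, is locally constant, hence constant
  set ψ : ℝ → S := fun x => ⟨φ x, hφpow x⟩ with hψ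
  have hψcont : Continuous ψ := by
    apply Continuous.subtype_mk
    exact hcont.div (Complex.continuous_exp.comp (by continuity)) hene
  have hψlc : IsLocallyConstant ψ := (IsLocallyConstant.iff_continuous ψ).mpr hψcont
  have hconst : ∀ x : ℝ, φ x = φ 0 := by
    intro x
    have := hψlc.apply_eq_of_preconnectedSpace x 0
    exact congrArg Subtype.val this
  -- so h x = h 0 * e x
  have hh : ∀ x : ℝ, h x = h 0 * e x := by
    intro x
    have h0 : φ 0 = h 0 := by
      rw [hφ]; simp [he]
    have hx : h x / e x = h 0 := h0 ▸ hconst x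
    rw [div_eq_iff (hene x)] at hx
    exact hx
  have h0ne : h 0 ≠ 0 := by
    intro h0
    have := hpow 0
    rw [h0, zero_pow hR.ne'] at this
    exact (Complex.exp_ne_zero _) this.symm
  have key : e (1 / P) = 1 := by
    have := hper 0
    rw [zero_add, hh (1 / P)] at this
    have h00 : h 0 = h 0 * 1 := by ring
    nth_rewrite 2 [h00] at this
    exact mul_left_cancel₀ h0ne this
  rw [he] at key
  simp only [Complex.exp_eq_one_iff] at key
  obtain ⟨n, hn⟩ := key
  have hPC : (P : ℂ) ≠ 0 := Nat.cast_ne_zero.mpr hP.ne'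
  have hpi : (Real.pi : ℂ) ≠ 0 := Complex.ofReal_ne_zero.mpr Real.pi_ne_zero
  have hMC : (M : ℂ) = n * R * P := by
    push_cast at hn
    field_simp at hn
    have h2 : (2 : ℂ) * Real.pi * Complex.I ≠ 0 := by
      simp [Complex.I_ne_zero, hpi]
    have := mul_left_cancel₀ h2 (by linear_combination (2 * (Real.pi : ℂ) * Complex.I) * hn :
      (2 : ℂ) * Real.pi * Complex.I * M = 2 * Real.pi * Complex.I * (n * R * P))
    exact this
  have hM : M = n * R * P := by
    exact_mod_cast hMC
  exact ⟨n, by rw [hM]; ring⟩
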